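/- Suppose f' is ν-Hölder continuous on C for some ν ∈ (0,1] with constant L_ν, i.e., ‖f'(x_1) − f'(x_2)‖ ≤ L_ν·‖x_1 − x_2‖^ν for all x_1, x_2 ∈ C. Then the curvature constant of order σ = 1+ν of f over C satisfies C_f^{(1+ν)} ≤ L_ν·δ^{1+ν}, where δ = diam(C); that is, f(x + γ(s − x)) ≤ f(x) + ⟨f'(x), γ(s − x)⟩ + (γ^{1+ν}/(1+ν))·L_ν·δ^{1+ν} for all x, s ∈ C and γ ∈ (0,1]. In particular, if f' is L-Lipschitz on C, then C_f^{(2)} ≤ L·δ². -/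

import Mathlib

open Set

private lemma rpow_mul_self' {a : ℝ} (ha : 0 ≤ a) {ν : ℝ} (hν : 0 < ν) :
    a ^ ν * a = a ^ (1 + ν) := by
  rcases ha.eq_or_lt with h | h
  · rw [← h, Real.zero_rpow hν.ne', Real.zero_rpow (by linarith), zero_mul]
  · rw [Real.rpow_add h, Real.rpow_one]; ring

private lemma key_holder {X : Type*} [NormedAddCommGroup X] [NormedSpace ℝ X]
    (C : Set X) (hCbd : Bornology.IsBounded C) (hCcv : Convex ℝ C)
    (f : X → ℝ) (f' : X → X →L[ℝ] ℝ)
    (hfderiv : ∀ x : X, HasFDerivAt f (f' x) x)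
    (ν : ℝ) (hν : ν ∈ Set.Ioc (0 : ℝ) 1) (Lν : ℝ) (hLν : 0 < Lν)
    (hHolder : ∀ x₁ ∈ C, ∀ x₂ ∈ C, ‖f' x₁ - f' x₂‖ ≤ Lν * ‖x₁ - x₂‖ ^ ν) :
    ∀ x ∈ C, ∀ s ∈ C, ∀ γ ∈ Set.Ioc (0 : ℝ) 1,
      f (x + γ • (s - x)) ≤ f x + f' x (γ • (s - x)) +
        γ ^ (1 + ν) / (1 + ν) * (Lν * Metric.diam C ^ (1 + ν)) := by
  obtain ⟨hν0, hν1⟩ := hν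
  intro x hx s hs γ hγ
  obtain ⟨hγ0, hγ1⟩ := hγ
  set d : X := γ • (s - x) with hd
  set δ : ℝ := Metric.diam C with hδdef
  have hδ : 0 ≤ δ := Metric.diam_nonneg
  have hγδ : 0 ≤ γ * δ := mul_nonneg hγ0.le hδ
  have hdle : ‖d‖ ≤ γ * δ := by
    rw [hd, norm_smul, Real.norm_of_nonneg hγ0.le]
    have : ‖s - x‖ ≤ δ := by
      rw [← dist_eq_norm]; exact Metric.dist_le_diam_of_mem hCbd hs hx
    exact mul_le_mul_of_nonneg_left this hγ0.le
  set K : ℝ := Lν * (γ * δ) ^ (1 + ν) with hK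
  have hmem : ∀ t ∈ Icc (0 : ℝ) 1, x + t • d ∈ C := by
    intro t ht
    have : x + t • d = x + (t * γ) • (s - x) := by rw [hd, smul_smul]
    rw [this]
    exact hCcv.add_smul_sub_mem hx hs
      ⟨mul_nonneg ht.1 hγ0.le, mul_le_one₀ ht.2 hγ0.le hγ1⟩
  set ψ : ℝ → ℝ := fun t => f (x + t • d) - t * f' x d - K * t ^ (1 + ν) / (1 + ν)
    with hψdef
  have h1ν : (0:ℝ) < 1 + ν := by linarith
  have hψderiv : ∀ t : ℝ, HasDerivAt ψ
      (f' (x + t • d) d - f' x d - K * t ^ ν) t := by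
    intro t
    have h1 : HasDerivAt (fun t : ℝ => f (x + t • d)) (f' (x + t • d) d) t := by
      have hl : HasDerivAt (fun t : ℝ => x + t • d) d t := by
        simpa using ((hasDerivAt_id t).smul_const d).const_add x
      exact (hfderiv _).comp_hasDerivAt t hl
    have h2 : HasDerivAt (fun t : ℝ => t * f' x d) (f' x d) t := by
      simpa using (hasDerivAt_id t).mul_const (f' x d)
    have h3 : HasDerivAt (fun t : ℝ => K * t ^ (1 + ν) / (1 + ν)) (K * t ^ ν) t := by
      have := ((Real.hasDerivAt_rpow_const (x := t) (p := 1 + ν)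
        (Or.inr (by linarith))).const_mul K).div_const (1 + ν)
      refine this.congr_deriv ?_
      rw [show (1 : ℝ) + ν - 1 = ν by ring]
      field_simp
    exact (h1.sub h2).sub h3
  have hanti : AntitoneOn ψ (Icc (0 : ℝ) 1) := by
    apply antitoneOn_of_deriv_nonpos (convex_Icc 0 1)
      (fun t _ => (hψderiv t).continuousAt.continuousWithinAt)
      (fun t _ => (hψderiv t).differentiableAt.differentiableWithinAt)
    intro t ht
    rw [interior_Icc] at ht
    rw [(hψderiv t).deriv]
    have hmemt : x + t • d ∈ C := hmem t ⟨ht.1.le, ht.2.le⟩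
    have hb1 : f' (x + t • d) d - f' x d ≤ ‖f' (x + t • d) - f' x‖ * ‖d‖ := by
      calc f' (x + t • d) d - f' x d = (f' (x + t • d) - f' x) d := by simp
        _ ≤ ‖(f' (x + t • d) - f' x) d‖ := le_abs_self _
        _ ≤ ‖f' (x + t • d) - f' x‖ * ‖d‖ := (f' (x + t • d) - f' x).le_opNorm d
    have hb2 : ‖f' (x + t • d) - f' x‖ ≤ Lν * ‖t • d‖ ^ ν := by
      have := hHolder _ hmemt _ hx
      simpa using this
    have hb3 : ‖t • d‖ ^ ν ≤ (t * (γ * δ)) ^ ν := by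
      apply Real.rpow_le_rpow (norm_nonneg _) _ hν0.le
      rw [norm_smul, Real.norm_of_nonneg ht.1.le]
      exact mul_le_mul_of_nonneg_left hdle ht.1.le
    have hbound : f' (x + t • d) d - f' x d ≤ K * t ^ ν := by
      calc f' (x + t • d) d - f' x d ≤ ‖f' (x + t • d) - f' x‖ * ‖d‖ := hb1
        _ ≤ (Lν * ‖t • d‖ ^ ν) * ‖d‖ :=
            mul_le_mul_of_nonneg_right hb2 (norm_nonneg _)
        _ ≤ (Lν * (t * (γ * δ)) ^ ν) * (γ * δ) := by
            apply mul_le_mul (mul_le_mul_of_nonneg_left hb3 hLν.le)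
              hdle (norm_nonneg _)
            exact mul_nonneg hLν.le (Real.rpow_nonneg (mul_nonneg ht.1.le hγδ) _)
        _ = K * t ^ ν := by
            rw [Real.mul_rpow ht.1.le hγδ, hK]
            rw [← rpow_mul_self' hγδ hν0]
            ring
    linarith
  have hψ10 : ψ 1 ≤ ψ 0 :=
    hanti (left_mem_Icc.2 zero_le_one) (right_mem_Icc.2 zero_le_one) zero_le_one
  have hψ0 : ψ 0 = f x := by
    simp [hψdef, Real.zero_rpow h1ν.ne']
  have hψ1 : ψ 1 = f (x + d) - f' x d - K / (1 + ν) := by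
    simp [hψdef, Real.one_rpow]
  rw [hψ1, hψ0] at hψ10
  have hKexp : K / (1 + ν) = γ ^ (1 + ν) / (1 + ν) * (Lν * δ ^ (1 + ν)) := by
    rw [hK, Real.mul_rpow hγ0.le hδ]
    ring
  linarith [hψ10, hKexp ▸ hψ10]

/-- **Curvature constant bound under Hölder continuity of the derivative**
(Corollary 4.6). If `f'` is `ν`-Hölder continuous on `C` with constant `L_ν`, then the
curvature constant of order `1+ν` of `f` over `C` is at most `L_ν δ^{1+ν}`, where
`δ = diam C`; i.e. `f(x+γ(s−x)) ≤ f(x) + ⟨f'(x), γ(s−x)⟩ + (γ^{1+ν}/(1+ν)) L_ν δ^{1+ν}`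
for all `x, s ∈ C`, `γ ∈ (0,1]`. In particular, if `f'` is `L`-Lipschitz on `C`, then
`f(x+γ(s−x)) ≤ f(x) + ⟨f'(x), γ(s−x)⟩ + (γ²/2) L δ²`. -/
theorem stmt_11
    {X : Type*} [NormedAddCommGroup X] [NormedSpace ℝ X] [CompleteSpace X]
    (C : Set X) (hCne : C.Nonempty) (hCcl : IsClosed C)
    (hCbd : Bornology.IsBounded C) (hCcv : Convex ℝ C)
    (f : X → ℝ) (f' : X → X →L[ℝ] ℝ)
    (hfderiv : ∀ x : X, HasFDerivAt f (f' x) x)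
    (ν : ℝ) (hν : ν ∈ Set.Ioc (0 : ℝ) 1) (Lν : ℝ) (hLν : 0 < Lν)
    (hHolder : ∀ x₁ ∈ C, ∀ x₂ ∈ C, ‖f' x₁ - f' x₂‖ ≤ Lν * ‖x₁ - x₂‖ ^ ν) :
    (∀ x ∈ C, ∀ s ∈ C, ∀ γ ∈ Set.Ioc (0 : ℝ) 1,
      f (x + γ • (s - x)) ≤ f x + f' x (γ • (s - x)) +
        γ ^ (1 + ν) / (1 + ν) * (Lν * Metric.diam C ^ (1 + ν)))
    ∧ (∀ L : ℝ, 0 < L →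
        (∀ x₁ ∈ C, ∀ x₂ ∈ C, ‖f' x₁ - f' x₂‖ ≤ L * ‖x₁ - x₂‖) →
        ∀ x ∈ C, ∀ s ∈ C, ∀ γ ∈ Set.Ioc (0 : ℝ) 1,
          f (x + γ • (s - x)) ≤ f x + f' x (γ • (s - x)) +
            γ ^ (2 : ℝ) / 2 * (L * Metric.diam C ^ (2 : ℝ))) := by
  constructor
  · exact key_holder C hCbd hCcv f f' hfderiv ν hν Lν hLν hHolder
  · intro L hL hLip
    have hLip' : ∀ x₁ ∈ C, ∀ x₂ ∈ C, ‖f' x₁ - f' x₂‖ ≤ L * ‖x₁ - x₂‖ ^ (1 : ℝ) := by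
      intro x₁ h₁ x₂ h₂
      simpa [Real.rpow_one] using hLip x₁ h₁ x₂ h₂
    have := key_holder C hCbd hCcv f f' hfderiv 1 ⟨one_pos, le_refl 1⟩ L hL hLip'
    intro x hx s hs γ hγ
    have h := this x hx s hs γ hγ
    norm_num at h ⊢
    convert h using 3 <;> norm_num
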